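/- Let f⊕ : GF(2)³ → GF(2) be the finite-field sum f⊕(x1, x2, x3) = x1 + x2 + x3 over GF(2). For any zero-error code for f⊕ with block length k and every a3 ∈ GF(2)^k, the map (x1, x2) ↦ (φ1(x1, φ31(a3)), φ2(x2, φ32(a3))) is injective on GF(2)^k × GF(2)^k. Consequently, with (X1, X2, X3) uniformly distributed on (GF(2)^k)³, Z1 := φ1(X1, φ31(X3)), Z2 := φ2(X2, φ32(X3)), and F⊕ := f⊕ applied componentwise, one has H(Z1 | X3) ≥ k, H(Z2 | X3) ≥ k, and H((Z1, Z2) | F⊕, X3) ≥ k. -/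

import Mathlib

open Classical

/-- A zero-error (variable-length) code for computing `f` componentwise with block length `k`
on the diamond network: encoders `phi31, phi32` (from `s₃`), `phi1, phi2` (to the terminal)
and a decoder `psi` that recovers `f^k` with zero error. -/
structure ZECode (A B Z : Type*) (k : ℕ) (f : A → A → A → B) where
  phi31 : (Fin k → A) → List Z
  phi32 : (Fin k → A) → List Z
  phi1 : (Fin k → A) → List Z → List Z
  phi2 : (Fin k → A) → List Z → List Z
  psi : List Z → List Z → (Fin k → B)
  zero_error : ∀ x1 x2 x3 : Fin k → A,
    psi (phi1 x1 (phi31 x3)) (phi2 x2 (phi32 x3)) = fun i => f (x1 i) (x2 i) (x3 i)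

/-- Base-2 Shannon entropy of the random variable `W` when the underlying finite sample
space `Ω` carries the uniform distribution (convention `0·log(1/0) = 0`). -/
noncomputable def uH {Ω S : Type*} [Fintype Ω] (W : Ω → S) : ℝ :=
  ∑ s ∈ Finset.univ.image W,
    (((Finset.univ.filter fun ω => W ω = s).card : ℝ) / (Fintype.card Ω : ℝ)) *
      Real.logb 2 ((Fintype.card Ω : ℝ) / ((Finset.univ.filter fun ω => W ω = s).card : ℝ))

/-- Base-2 conditional Shannon entropy `H(W | V)` for the uniform distribution on `Ω`:
`H(W|V) = ∑_v P(V = v) · H(W | V = v)`, with the convention `0·log(1/0) = 0`. -/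
noncomputable def uCondH {Ω S T : Type*} [Fintype Ω] (W : Ω → S) (V : Ω → T) : ℝ :=
  ∑ v ∈ Finset.univ.image V, ∑ s ∈ Finset.univ.image W,
    (((Finset.univ.filter fun ω => W ω = s ∧ V ω = v).card : ℝ) / (Fintype.card Ω : ℝ)) *
      Real.logb 2 (((Finset.univ.filter fun ω => V ω = v).card : ℝ) /
        ((Finset.univ.filter fun ω => W ω = s ∧ V ω = v).card : ℝ))

/-- `x1 ≡^{a3} y1 |₁` : `f(x1, x2, a3) = f(y1, x2, a3)` for all `x2`. -/
def eqv1 {A B : Type*} (f : A → A → A → B) (a3 : A) (x y : A) : Prop :=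
  ∀ x2, f x x2 a3 = f y x2 a3

/-- `x2 ≡^{a3} y2 |₂` : `f(x1, x2, a3) = f(x1, y2, a3)` for all `x1`. -/
def eqv2 {A B : Type*} (f : A → A → A → B) (a3 : A) (x y : A) : Prop :=
  ∀ x1, f x1 x a3 = f x1 y a3

/-- Componentwise extension of `≡^{a3}|₁` to blocks of length `k`. -/
def eqv1k {A B : Type*} (f : A → A → A → B) {k : ℕ} (a3 : Fin k → A) (x y : Fin k → A) : Prop :=
  ∀ i, eqv1 f (a3 i) (x i) (y i)

/-- Componentwise extension of `≡^{a3}|₂` to blocks of length `k`. -/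
def eqv2k {A B : Type*} (f : A → A → A → B) {k : ℕ} (a3 : Fin k → A) (x y : Fin k → A) : Prop :=
  ∀ i, eqv2 f (a3 i) (x i) (y i)

/-- `≡^{a3}|₁` as a setoid on `A`. -/
def eqv1Setoid {A B : Type*} (f : A → A → A → B) (a3 : A) : Setoid A where
  r := eqv1 f a3
  iseqv := ⟨fun _ _ => rfl, fun h x2 => (h x2).symm, fun h h' x2 => (h x2).trans (h' x2)⟩

/-- `≡^{a3}|₂` as a setoid on `A`. -/
def eqv2Setoid {A B : Type*} (f : A → A → A → B) (a3 : A) : Setoid A where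
  r := eqv2 f a3
  iseqv := ⟨fun _ _ => rfl, fun h x1 => (h x1).symm, fun h h' x1 => (h x1).trans (h' x1)⟩

/-- `≡^{a3}|₁` as a setoid on `A^k`. -/
def eqv1kSetoid {A B : Type*} (f : A → A → A → B) {k : ℕ} (a3 : Fin k → A) :
    Setoid (Fin k → A) where
  r := eqv1k f a3
  iseqv := ⟨fun _ _ _ => rfl, fun h i x2 => (h i x2).symm,
    fun h h' i x2 => (h i x2).trans (h' i x2)⟩

/-- `≡^{a3}|₂` as a setoid on `A^k`. -/
def eqv2kSetoid {A B : Type*} (f : A → A → A → B) {k : ℕ} (a3 : Fin k → A) :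
    Setoid (Fin k → A) where
  r := eqv2k f a3
  iseqv := ⟨fun _ _ _ => rfl, fun h i x1 => (h i x1).symm,
    fun h h' i x1 => (h i x1).trans (h' i x1)⟩

/-- The finite-field sum demand function `f⊕ : GF(2)³ → GF(2)`. -/
def fxor (x1 x2 x3 : ZMod 2) : ZMod 2 := x1 + x2 + x3


lemma sum_fiber_card {Ω S T : Type*} [Fintype Ω] (W : Ω → S) (V : Ω → T) :
    ∑ v ∈ Finset.univ.image V, ∑ s ∈ Finset.univ.image W,
      (Finset.univ.filter fun ω => W ω = s ∧ V ω = v).card = Fintype.card Ω := by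
  rw [← Finset.card_univ,
    Finset.card_eq_sum_card_fiberwise (f := V) (fun x _ => Finset.mem_image_of_mem V (Finset.mem_univ x))]
  refine Finset.sum_congr rfl fun v _ => ?_
  rw [Finset.card_eq_sum_card_fiberwise (f := W) (t := Finset.univ.image W)
    (fun x _ => Finset.mem_image_of_mem W (Finset.mem_univ x))]
  refine Finset.sum_congr rfl fun s _ => ?_
  congr 1
  rw [Finset.filter_filter]
  exact Finset.filter_congr fun ω _ => by tauto

lemma uCondH_ge {Ω S T : Type*} [Fintype Ω] [Nonempty Ω] (W : Ω → S) (V : Ω → T) (k : ℕ)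
    (h : ∀ ω : Ω, 2^k * (Finset.univ.filter fun ω' => W ω' = W ω ∧ V ω' = V ω).card
        ≤ (Finset.univ.filter fun ω' => V ω' = V ω).card) :
    (k : ℝ) ≤ uCondH W V := by
  classical
  unfold uCondH
  have hN : (0 : ℝ) < (Fintype.card Ω : ℝ) := by
    exact_mod_cast Fintype.card_pos
  have key : ∀ v ∈ Finset.univ.image V, ∀ s ∈ Finset.univ.image W,
      (k : ℝ) * (((Finset.univ.filter fun ω => W ω = s ∧ V ω = v).card : ℝ) / (Fintype.card Ω : ℝ))
      ≤ (((Finset.univ.filter fun ω => W ω = s ∧ V ω = v).card : ℝ) / (Fintype.card Ω : ℝ)) *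
        Real.logb 2 (((Finset.univ.filter fun ω => V ω = v).card : ℝ) /
          ((Finset.univ.filter fun ω => W ω = s ∧ V ω = v).card : ℝ)) := by
    intro v _ s _
    set Nsv := (Finset.univ.filter fun ω => W ω = s ∧ V ω = v).card with hNsv
    rcases Nat.eq_zero_or_pos Nsv with h0 | hpos
    · simp [h0]
    · obtain ⟨ω0, hω0⟩ := Finset.card_pos.mp hpos
      simp only [Finset.mem_filter] at hω0
      obtain ⟨-, hWs, hVv⟩ := hω0
      have hle := h ω0
      rw [hWs, hVv] at hle
      rw [mul_comm]
      apply mul_le_mul_of_nonneg_left _ (by positivity)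
      have h2k : (2 : ℝ)^k ≤ ((Finset.univ.filter fun ω => V ω = v).card : ℝ) / (Nsv : ℝ) := by
        rw [le_div_iff₀ (by exact_mod_cast hpos)]
        exact_mod_cast hle
      calc (k : ℝ) = Real.logb 2 ((2:ℝ)^k) := by
            rw [Real.logb_pow, Real.logb_self_eq_one (by norm_num), mul_one]
        _ ≤ _ := Real.logb_le_logb_of_le (by norm_num) (by positivity) h2k
  have hsum : ∑ v ∈ Finset.univ.image V, ∑ s ∈ Finset.univ.image W,
      (((Finset.univ.filter fun ω => W ω = s ∧ V ω = v).card : ℝ) / (Fintype.card Ω : ℝ)) = 1 := by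
    simp only [← Finset.sum_div]
    rw [div_eq_one_iff_eq hN.ne']
    exact_mod_cast congrArg (Nat.cast : ℕ → ℝ) (sum_fiber_card W V)
  calc (k : ℝ) = (k : ℝ) * 1 := by ring
    _ = ∑ v ∈ Finset.univ.image V, ∑ s ∈ Finset.univ.image W,
        (k : ℝ) * (((Finset.univ.filter fun ω => W ω = s ∧ V ω = v).card : ℝ) / (Fintype.card Ω : ℝ)) := by
        simp only [← Finset.mul_sum]
        rw [hsum]
    _ ≤ _ := by
        apply Finset.sum_le_sum
        intro v hv
        apply Finset.sum_le_sum
        intro s hs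
        exact key v hv s hs

section Aux

variable {Zc : Type*}

lemma card_pow (k : ℕ) : Fintype.card (Fin k → ZMod 2) = 2 ^ k := by
  simp [Fintype.card_fun]

lemma zec_inj {k : ℕ} (c : ZECode (ZMod 2) (ZMod 2) Zc k fxor) (a3 : Fin k → ZMod 2) :
    Function.Injective (fun p : (Fin k → ZMod 2) × (Fin k → ZMod 2) =>
      (c.phi1 p.1 (c.phi31 a3), c.phi2 p.2 (c.phi32 a3))) := by
  intro p q h
  simp only [Prod.mk.injEq] at h
  obtain ⟨h1, h2⟩ := h
  have e1 : p.1 = q.1 := by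
    have hp := c.zero_error p.1 p.2 a3
    have hq := c.zero_error q.1 p.2 a3
    rw [h1] at hp
    have heq := hp.symm.trans hq
    funext i
    have hi := congrFun heq i
    simp only [fxor] at hi
    linear_combination hi
  have e2 : p.2 = q.2 := by
    have hp := c.zero_error p.1 p.2 a3
    have hq := c.zero_error p.1 q.2 a3
    rw [h2] at hp
    have heq := hp.symm.trans hq
    funext i
    have hi := congrFun heq i
    simp only [fxor] at hi
    linear_combination hi
  exact Prod.ext e1 e2

lemma zec_inj1 {k : ℕ} (c : ZECode (ZMod 2) (ZMod 2) Zc k fxor) (a3 : Fin k → ZMod 2) :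
    Function.Injective (fun x1 => c.phi1 x1 (c.phi31 a3)) := by
  intro x y h
  have := zec_inj c a3 (a₁ := (x, x)) (a₂ := (y, x)) (by simp [h])
  exact (Prod.mk.injEq _ _ _ _).mp this |>.1

lemma zec_inj2 {k : ℕ} (c : ZECode (ZMod 2) (ZMod 2) Zc k fxor) (a3 : Fin k → ZMod 2) :
    Function.Injective (fun x2 => c.phi2 x2 (c.phi32 a3)) := by
  intro x y h
  have := zec_inj c a3 (a₁ := (x, x)) (a₂ := (x, y)) (by simp [h])
  exact (Prod.mk.injEq _ _ _ _).mp this |>.2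

end Aux

theorem stmt_18 {Z : Type*} [Fintype Z] (hZ : 1 < Fintype.card Z)
    {k : ℕ} (hk : 1 ≤ k) (c : ZECode (ZMod 2) (ZMod 2) Z k fxor) :
    (∀ a3 : Fin k → ZMod 2,
      Function.Injective (fun p : (Fin k → ZMod 2) × (Fin k → ZMod 2) =>
        (c.phi1 p.1 (c.phi31 a3), c.phi2 p.2 (c.phi32 a3)))) ∧
    uCondH
        (fun ω : (Fin k → ZMod 2) × (Fin k → ZMod 2) × (Fin k → ZMod 2) =>
          c.phi1 ω.1 (c.phi31 ω.2.2))
        (fun ω : (Fin k → ZMod 2) × (Fin k → ZMod 2) × (Fin k → ZMod 2) => ω.2.2) ≥ k ∧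
    uCondH
        (fun ω : (Fin k → ZMod 2) × (Fin k → ZMod 2) × (Fin k → ZMod 2) =>
          c.phi2 ω.2.1 (c.phi32 ω.2.2))
        (fun ω : (Fin k → ZMod 2) × (Fin k → ZMod 2) × (Fin k → ZMod 2) => ω.2.2) ≥ k ∧
    uCondH
        (fun ω : (Fin k → ZMod 2) × (Fin k → ZMod 2) × (Fin k → ZMod 2) =>
          (c.phi1 ω.1 (c.phi31 ω.2.2), c.phi2 ω.2.1 (c.phi32 ω.2.2)))
        (fun ω : (Fin k → ZMod 2) × (Fin k → ZMod 2) × (Fin k → ZMod 2) =>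
          ((fun i => fxor (ω.1 i) (ω.2.1 i) (ω.2.2 i)), ω.2.2)) ≥ k := by
  classical
  refine ⟨fun a3 => zec_inj c a3, ?_, ?_, ?_⟩
  · -- H(Z1 | X3) ≥ k
    apply uCondH_ge
    intro ω
    refine le_trans (b := 2 ^ k * 2 ^ k) (Nat.mul_le_mul_left _ ?_) ?_
    · rw [← card_pow k, ← Finset.card_univ]
      apply Finset.card_le_card_of_injOn (fun ω' => ω'.2.1) (fun _ _ => Finset.mem_univ _)
      intro x hx y hy hxy
      simp only [Finset.mem_coe, Finset.mem_filter] at hx hy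
      obtain ⟨-, hx1, hx3⟩ := hx
      obtain ⟨-, hy1, hy3⟩ := hy
      rw [hx3] at hx1; rw [hy3] at hy1
      have := zec_inj1 c ω.2.2 (hx1.trans hy1.symm)
      exact Prod.ext this (Prod.ext hxy (hx3.trans hy3.symm))
    · have : (2:ℕ) ^ k * 2 ^ k
          = Fintype.card ((Fin k → ZMod 2) × (Fin k → ZMod 2)) := by
        simp [Fintype.card_prod, card_pow]
      rw [this, ← Finset.card_univ]
      apply Finset.card_le_card_of_injOn (fun p => (p.1, p.2, ω.2.2))
      · intro p _; simp
      · intro p _ q _ h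
        simpa [Prod.ext_iff] using h
  · -- H(Z2 | X3) ≥ k
    apply uCondH_ge
    intro ω
    refine le_trans (b := 2 ^ k * 2 ^ k) (Nat.mul_le_mul_left _ ?_) ?_
    · rw [← card_pow k, ← Finset.card_univ]
      apply Finset.card_le_card_of_injOn (fun ω' => ω'.1) (fun _ _ => Finset.mem_univ _)
      intro x hx y hy hxy
      simp only [Finset.mem_coe, Finset.mem_filter] at hx hy
      obtain ⟨-, hx1, hx3⟩ := hx
      obtain ⟨-, hy1, hy3⟩ := hy
      rw [hx3] at hx1; rw [hy3] at hy1
      have := zec_inj2 c ω.2.2 (hx1.trans hy1.symm)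
      exact Prod.ext hxy (Prod.ext this (hx3.trans hy3.symm))
    · have : (2:ℕ) ^ k * 2 ^ k
          = Fintype.card ((Fin k → ZMod 2) × (Fin k → ZMod 2)) := by
        simp [Fintype.card_prod, card_pow]
      rw [this, ← Finset.card_univ]
      apply Finset.card_le_card_of_injOn (fun p => (p.1, p.2, ω.2.2))
      · intro p _; simp
      · intro p _ q _ h
        simpa [Prod.ext_iff] using h
  · -- H((Z1,Z2) | (F, X3)) ≥ k
    apply uCondH_ge
    intro ω
    refine le_trans (b := 2 ^ k * 1) (Nat.mul_le_mul_left _ ?_) ?_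
    · apply Finset.card_le_one.mpr
      intro x hx y hy
      simp only [Finset.mem_filter, Prod.mk.injEq] at hx hy
      obtain ⟨-, ⟨hx1, hx2⟩, -, hx3⟩ := hx
      obtain ⟨-, ⟨hy1, hy2⟩, -, hy3⟩ := hy
      rw [hx3] at hx1 hx2; rw [hy3] at hy1 hy2
      have := zec_inj c ω.2.2 (a₁ := (x.1, x.2.1)) (a₂ := (y.1, y.2.1))
        (by simp [hx1, hy1.symm, hx2, hy2.symm])
      simp only [Prod.mk.injEq] at this
      exact Prod.ext this.1 (Prod.ext this.2 (hx3.trans hy3.symm))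
    · rw [Nat.mul_one]
      rw [← card_pow k, ← Finset.card_univ]
      apply Finset.card_le_card_of_injOn
        (fun x1 => (x1, (fun i => ω.1 i + ω.2.1 i - x1 i), ω.2.2))
      · intro x1 _
        have hfe : (fun i => fxor (x1 i) (ω.1 i + ω.2.1 i - x1 i) (ω.2.2 i))
            = (fun i => fxor (ω.1 i) (ω.2.1 i) (ω.2.2 i)) :=
          funext fun i => by simp only [fxor]; ring
        simp only [Finset.coe_filter, Finset.mem_coe, Set.mem_setOf_eq, Finset.mem_filter, Finset.mem_univ, true_and]
        exact Prod.ext hfe rfl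
      · intro p _ q _ h
        exact congrArg Prod.fst h
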